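/- For every r ≥ 2 and every e with 2 ≤ e ≤ r, there exists an artinian Gorenstein algebra of codimension r, presented by quadrics, with socle degree e. -/

import Mathlib

open MvPolynomial

/-- The degree-`d` graded piece of the quotient `R/I`, as the image of the
homogeneous polynomials of degree `d`. -/
noncomputable def quotPiece (k : Type*) [Field k] (σ : Type*)
    (I : Ideal (MvPolynomial σ k)) (d : ℕ) :
    Submodule k (MvPolynomial σ k ⧸ I) :=
  Submodule.map (Ideal.Quotient.mkₐ k I).toLinearMap
    (MvPolynomial.homogeneousSubmodule σ k d)

/-- The Hilbert function of the standard graded algebra `R/I`. -/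
noncomputable def hilb (k : Type*) [Field k] (σ : Type*)
    (I : Ideal (MvPolynomial σ k)) (d : ℕ) : ℕ :=
  Module.finrank k (quotPiece k σ I d)

/-- `I` is a homogeneous ideal with respect to the standard grading. -/
def IsHomog (k : Type*) [Field k] (σ : Type*) (I : Ideal (MvPolynomial σ k)) : Prop :=
  ∀ p ∈ I, ∀ d : ℕ, MvPolynomial.homogeneousComponent d p ∈ I

/-- `I` contains no nonzero linear form. -/
def NoLinearForms (k : Type*) [Field k] (σ : Type*) (I : Ideal (MvPolynomial σ k)) : Prop :=
  ∀ p : MvPolynomial σ k, p.IsHomogeneous 1 → p ∈ I → p = 0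

/-- `I` is generated by homogeneous forms of degree 2. -/
def GenByQuadrics (k : Type*) [Field k] (σ : Type*) (I : Ideal (MvPolynomial σ k)) : Prop :=
  ∃ S : Set (MvPolynomial σ k), (∀ p ∈ S, p.IsHomogeneous 2) ∧ I = Ideal.span S

/-- The graded algebra `R/I` is artinian: its Hilbert function eventually vanishes. -/
def ArtinianHF (k : Type*) [Field k] (σ : Type*) (I : Ideal (MvPolynomial σ k)) : Prop :=
  ∃ N : ℕ, ∀ d : ℕ, N ≤ d → hilb k σ I d = 0

/-- The socle of `R/I`: the annihilator of the irrelevant maximal ideal. -/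
noncomputable def socle (k : Type*) [Field k] (σ : Type*) (I : Ideal (MvPolynomial σ k)) :
    Submodule k (MvPolynomial σ k ⧸ I) :=
  ⨅ i : σ, LinearMap.ker (LinearMap.mulLeft k (Ideal.Quotient.mk I (MvPolynomial.X i)))

/-- An artinian graded algebra `R/I` is Gorenstein iff its socle is 1-dimensional,
i.e. its Cohen-Macaulay type is 1. -/
def GorensteinHF (k : Type*) [Field k] (σ : Type*) (I : Ideal (MvPolynomial σ k)) : Prop :=
  Module.finrank k (socle k σ I) = 1

/-- `e` is the socle degree of `R/I`: the top degree where the Hilbert function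
does not vanish. -/
def IsSocleDegree (k : Type*) [Field k] (σ : Type*) (I : Ideal (MvPolynomial σ k))
    (e : ℕ) : Prop :=
  hilb k σ I e ≠ 0 ∧ ∀ d : ℕ, e < d → hilb k σ I d = 0

/-- `I` contains a regular sequence consisting of `r` quadrics. -/
def ContainsRegSeqQuadrics (k : Type*) [Field k] (r : ℕ)
    (I : Ideal (MvPolynomial (Fin r) k)) : Prop :=
  ∃ Q : Fin r → MvPolynomial (Fin r) k,
    (∀ i, (Q i).IsHomogeneous 2) ∧ (∀ i, Q i ∈ I) ∧
      RingTheory.Sequence.IsRegular (MvPolynomial (Fin r) k) (List.ofFn Q)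

/-- An artinian Gorenstein standard graded algebra presented by quadrics. -/
def AGQuad (k : Type*) [Field k] (σ : Type*) (I : Ideal (MvPolynomial σ k)) : Prop :=
  IsHomog k σ I ∧ NoLinearForms k σ I ∧ GenByQuadrics k σ I ∧
    ArtinianHF k σ I ∧ GorensteinHF k σ I

/-- The linear form with coefficient vector `c`. -/
noncomputable def linForm (k : Type*) [Field k] (r : ℕ) (c : Fin r → k) :
    MvPolynomial (Fin r) k :=
  ∑ i, MvPolynomial.C (c i) * MvPolynomial.X i

/-- The degree-2 part of an ideal, as a `k`-vector space. -/
noncomputable def quadPart (k : Type*) [Field k] (σ : Type*)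
    (I : Ideal (MvPolynomial σ k)) : Submodule k (MvPolynomial σ k) :=
  Submodule.restrictScalars k I ⊓ MvPolynomial.homogeneousSubmodule σ k 2


namespace Stmt8Aux

open Finsupp

variable (r s : ℕ)

/-- degree in the x-variables (indices `< s`) -/
def xdeg (v : Fin r →₀ ℕ) : ℕ := ∑ i : Fin r, if (i : ℕ) < s then v i else 0

/-- degree in the y-variables (indices `≥ s`) -/
def ydeg (v : Fin r →₀ ℕ) : ℕ := ∑ i : Fin r, if (i : ℕ) < s then 0 else v i

/-- total degree -/
def deg (v : Fin r →₀ ℕ) : ℕ := ∑ i : Fin r, v i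

lemma deg_eq (v : Fin r →₀ ℕ) : deg r v = xdeg r s v + ydeg r s v := by
  rw [xdeg, ydeg, ← Finset.sum_add_distrib]
  refine Finset.sum_congr rfl fun i _ => ?_
  split_ifs <;> omega

lemma deg_eq_degree (v : Fin r →₀ ℕ) : deg r v = Finsupp.degree v := by
  rw [Finsupp.degree, deg]
  exact (Finset.sum_subset (Finset.subset_univ _)
    (fun i _ hi => Finsupp.notMem_support_iff.mp hi)).symm

lemma xdeg_add (v w : Fin r →₀ ℕ) : xdeg r s (v + w) = xdeg r s v + xdeg r s w := by
  rw [xdeg, xdeg, xdeg, ← Finset.sum_add_distrib]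
  refine Finset.sum_congr rfl fun i _ => ?_
  simp only [Finsupp.add_apply]
  split_ifs <;> omega

lemma ydeg_add (v w : Fin r →₀ ℕ) : ydeg r s (v + w) = ydeg r s v + ydeg r s w := by
  rw [ydeg, ydeg, ydeg, ← Finset.sum_add_distrib]
  refine Finset.sum_congr rfl fun i _ => ?_
  simp only [Finsupp.add_apply]
  split_ifs <;> omega

lemma deg_add (v w : Fin r →₀ ℕ) : deg r (v + w) = deg r v + deg r w := by
  rw [deg, deg, deg, ← Finset.sum_add_distrib]
  exact Finset.sum_congr rfl fun i _ => rfl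

lemma xdeg_single (i : Fin r) (n : ℕ) :
    xdeg r s (Finsupp.single i n) = if (i : ℕ) < s then n else 0 := by
  rw [xdeg]
  rw [Finset.sum_eq_single i]
  · simp
  · intro j _ hj
    simp only [Finsupp.single_apply, if_neg (fun h : i = j => hj h.symm)]
    split_ifs <;> rfl
  · simp

lemma ydeg_single (i : Fin r) (n : ℕ) :
    ydeg r s (Finsupp.single i n) = if (i : ℕ) < s then 0 else n := by
  rw [ydeg]
  rw [Finset.sum_eq_single i]
  · simp
  · intro j _ hj
    simp only [Finsupp.single_apply, if_neg (fun h : i = j => hj h.symm)]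
    split_ifs <;> rfl
  · simp

lemma deg_single (i : Fin r) (n : ℕ) : deg r (Finsupp.single i n) = n := by
  rw [deg, Finset.sum_eq_single i]
  · simp
  · intro j _ hj
    simp only [Finsupp.single_apply, if_neg (fun h : i = j => hj h.symm)]
  · simp

/-- all y-exponents are ≤ 1 -/
def goodY (v : Fin r →₀ ℕ) : Prop := ∀ j : Fin r, s ≤ (j : ℕ) → v j ≤ 1

/-- at most one x-variable occurs -/
def singleX (v : Fin r →₀ ℕ) : Prop :=
  ∀ i j : Fin r, (i : ℕ) < s → (j : ℕ) < s → i ≠ j → v i = 0 ∨ v j = 0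

/-- standard-form exponent vectors (before normalization of the x²-part) -/
def Std (v : Fin r →₀ ℕ) : Prop := goodY r s v ∧ singleX r s v ∧ xdeg r s v ≤ 2

/-- the y-part of an exponent vector -/
noncomputable def ypart (v : Fin r →₀ ℕ) : Fin r →₀ ℕ :=
  Finsupp.filter (fun i : Fin r => s ≤ (i : ℕ)) v

lemma ypart_apply (v : Fin r →₀ ℕ) (i : Fin r) :
    ypart r s v i = if s ≤ (i : ℕ) then v i else 0 := rfl

end Stmt8Aux

namespace Stmt8Aux
open Finsupp
variable (r s : ℕ)

lemma xdeg_eq_zero_iff (v : Fin r →₀ ℕ) :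
    xdeg r s v = 0 ↔ ∀ i : Fin r, (i : ℕ) < s → v i = 0 := by
  rw [xdeg, Finset.sum_eq_zero_iff]
  constructor
  · intro h i hi
    have := h i (Finset.mem_univ i)
    rwa [if_pos hi] at this
  · intro h i _
    split_ifs with hi
    · exact h i hi
    · rfl

lemma ypart_eq_self (v : Fin r →₀ ℕ) (h : xdeg r s v = 0) : ypart r s v = v := by
  ext i
  rw [ypart_apply]
  split_ifs with hi
  · rfl
  · exact ((xdeg_eq_zero_iff r s v).mp h i (by omega)).symm

lemma xdeg_ypart (v : Fin r →₀ ℕ) : xdeg r s (ypart r s v) = 0 := by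
  rw [xdeg_eq_zero_iff]
  intro i hi
  rw [ypart_apply, if_neg (by omega)]

lemma ydeg_ypart (v : Fin r →₀ ℕ) : ydeg r s (ypart r s v) = ydeg r s v := by
  rw [ydeg, ydeg]
  refine Finset.sum_congr rfl fun i _ => ?_
  rw [ypart_apply]
  split_ifs with h1 h2 <;> try rfl
  omega

lemma exists_x (v : Fin r →₀ ℕ) (hsx : singleX r s v) (h0 : xdeg r s v ≠ 0) :
    ∃ i : Fin r, (i : ℕ) < s ∧ v i = xdeg r s v ∧ v = ypart r s v + Finsupp.single i (v i) := by
  obtain ⟨i, _, hi⟩ := Finset.exists_ne_zero_of_sum_ne_zero h0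
  have hilt : (i : ℕ) < s := by by_contra h; rw [if_neg h] at hi; exact hi rfl
  rw [if_pos hilt] at hi
  refine ⟨i, hilt, ?_, ?_⟩
  · rw [xdeg, Finset.sum_eq_single i]
    · rw [if_pos hilt]
    · intro j _ hj
      split_ifs with hjlt
      · rcases hsx j i hjlt hilt hj with h | h
        · exact h
        · exact absurd h hi
      · rfl
    · simp
  · ext j
    rw [Finsupp.add_apply, ypart_apply, Finsupp.single_apply]
    by_cases hji : i = j
    · subst hji; rw [if_neg (by omega), if_pos rfl]; omega
    · rw [if_neg hji]
      split_ifs with h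
      · omega
      · rcases hsx j i (by omega) hilt (fun e => hji e.symm) with h' | h'
        · omega
        · exact absurd h' hi

variable [NeZero r]

/-- index of the distinguished x-variable -/
def i0 : Fin r := 0

lemma i0_lt (h : 0 < s) : ((i0 r : Fin r) : ℕ) < s := by
  have : ((i0 r : Fin r) : ℕ) = 0 := rfl
  omega

/-- normalization of a standard exponent vector: replace the x-part `xᵢ²` by `x₀²` -/
noncomputable def adjust (v : Fin r →₀ ℕ) : Fin r →₀ ℕ :=
  if xdeg r s v = 2 then ypart r s v + Finsupp.single (i0 r) 2 else v

lemma deg_adjust (v : Fin r →₀ ℕ) : deg r (adjust r s v) = deg r v := by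
  rw [adjust]
  split_ifs with h
  · rw [deg_add, deg_single, deg_eq r s, xdeg_ypart, ydeg_ypart, deg_eq r s v, h]; omega
  · rfl

lemma xdeg_adjust_of (v : Fin r →₀ ℕ) (hs : 0 < s) (h : xdeg r s v = 2) :
    xdeg r s (adjust r s v) = 2 := by
  rw [adjust, if_pos h, xdeg_add, xdeg_ypart, xdeg_single, if_pos (i0_lt r s hs)]

lemma ypart_adjust (v : Fin r →₀ ℕ) (hs : 0 < s) (h : xdeg r s v = 2) :
    ypart r s (adjust r s v) = ypart r s v := by
  rw [adjust, if_pos h]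
  ext j
  rw [ypart_apply, ypart_apply]
  split_ifs with h1
  · rw [Finsupp.add_apply, ypart_apply, if_pos h1, Finsupp.single_apply,
      if_neg (fun e : i0 r = j => by
        have h0 : ((i0 r : Fin r) : ℕ) = 0 := rfl
        rw [e] at h0; omega), add_zero]
  · rfl

lemma std_adjust (v : Fin r →₀ ℕ) (hs : 0 < s) (h : Std r s v) : Std r s (adjust r s v) := by
  obtain ⟨hy, hx, hd⟩ := h
  rw [adjust]
  split_ifs with h2
  · refine ⟨?_, ?_, ?_⟩
    · intro j hj
      rw [Finsupp.add_apply, ypart_apply, if_pos hj, Finsupp.single_apply]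
      have h0 : ((i0 r : Fin r) : ℕ) = 0 := rfl
      rw [if_neg (by intro e; rw [e] at h0; omega)]
      simpa using hy j hj
    · intro a b ha hb hab
      rw [Finsupp.add_apply, Finsupp.add_apply, ypart_apply, if_neg (by omega),
        ypart_apply, if_neg (by omega), Finsupp.single_apply, Finsupp.single_apply]
      by_cases hA : i0 r = a
      · right
        simp [if_neg (fun e : i0 r = b => hab (hA.symm.trans e))]
      · left
        simp [if_neg hA]
    · rw [xdeg_add, xdeg_ypart, xdeg_single, if_pos (i0_lt r s hs)]
  · exact ⟨hy, hx, hd⟩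

lemma adjust_adjust (v : Fin r →₀ ℕ) (hs : 0 < s) : adjust r s (adjust r s v) = adjust r s v := by
  by_cases h : xdeg r s v = 2
  · rw [adjust, if_pos (xdeg_adjust_of r s v hs h)]
    rw [ypart_adjust r s v hs h]
    rw [adjust, if_pos h]
  · rw [adjust, adjust, if_neg h, if_neg h]

end Stmt8Aux

namespace Stmt8Aux
open Finsupp
variable (k : Type*) [Field k] (r s : ℕ) [NeZero r]

open Classical in
/-- The normal form of a monomial. -/
noncomputable def nf (v : Fin r →₀ ℕ) : MvPolynomial (Fin r) k :=
  if Std r s v then monomial (adjust r s v) (1 : k) else 0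

lemma nf_of_std {v : Fin r →₀ ℕ} (h : Std r s v) :
    nf k r s v = monomial (adjust r s v) (1 : k) := by
  rw [nf]; exact if_pos h

lemma nf_of_not_std {v : Fin r →₀ ℕ} (h : ¬ Std r s v) : nf k r s v = 0 := by
  rw [nf]; exact if_neg h

lemma nf_homog (v : Fin r →₀ ℕ) : (nf k r s v).IsHomogeneous (deg r v) := by
  by_cases h : Std r s v
  · rw [nf_of_std k r s h]
    exact isHomogeneous_monomial _ (by rw [← deg_eq_degree, deg_adjust])
  · rw [nf_of_not_std k r s h]
    exact isHomogeneous_zero _ _ _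

/-- Canonical (normal-form) exponent vectors. -/
def Can (v : Fin r →₀ ℕ) : Prop := Std r s v ∧ adjust r s v = v

lemma nf_of_can {v : Fin r →₀ ℕ} (h : Can r s v) : nf k r s v = monomial v (1 : k) := by
  rw [nf_of_std k r s h.1, h.2]

lemma can_adjust {v : Fin r →₀ ℕ} (hs : 0 < s) (h : Std r s v) : Can r s (adjust r s v) :=
  ⟨std_adjust r s v hs h, adjust_adjust r s v hs⟩

/-- The normal-form projection, as a linear map. -/
noncomputable def NN : MvPolynomial (Fin r) k →ₗ[k] MvPolynomial (Fin r) k :=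
  (basisMonomials (Fin r) k).constr k (nf k r s)

lemma NN_monomial_one (v : Fin r →₀ ℕ) : NN k r s (monomial v (1 : k)) = nf k r s v := by
  have h : (monomial v (1 : k)) = basisMonomials (Fin r) k v := by
    rw [coe_basisMonomials]
  rw [h, NN, Module.Basis.constr_basis]

lemma NN_monomial (v : Fin r →₀ ℕ) (c : k) : NN k r s (monomial v c) = c • nf k r s v := by
  have h : (monomial v c) = c • monomial v (1 : k) := by
    rw [smul_monomial, smul_eq_mul, mul_one]
  rw [h, map_smul, NN_monomial_one]

lemma NN_apply (p : MvPolynomial (Fin r) k) :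
    NN k r s p = ∑ v ∈ p.support, coeff v p • nf k r s v := by
  conv_lhs => rw [← support_sum_monomial_coeff p]
  rw [map_sum]
  exact Finset.sum_congr rfl fun v _ => NN_monomial k r s v _

end Stmt8Aux

namespace Stmt8Aux
open Finsupp
variable (k : Type*) [Field k] (r s : ℕ) [NeZero r]

/-- The generating quadrics. -/
def genSet : Set (MvPolynomial (Fin r) k) :=
  {p | (∃ i j : Fin r, (i : ℕ) < s ∧ (j : ℕ) < s ∧ i ≠ j ∧ p = X i * X j) ∨
       (∃ i : Fin r, (i : ℕ) < s ∧ i ≠ i0 r ∧ p = X i ^ 2 - X (i0 r) ^ 2) ∨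
       (∃ j : Fin r, s ≤ (j : ℕ) ∧ p = X j ^ 2)}

/-- The defining ideal. -/
noncomputable def myIdeal : Ideal (MvPolynomial (Fin r) k) := Ideal.span (genSet k r s)

lemma gen_homog : ∀ p ∈ genSet k r s, MvPolynomial.IsHomogeneous p 2 := by
  rintro p (⟨i, j, _, _, _, rfl⟩ | ⟨i, _, _, rfl⟩ | ⟨j, _, rfl⟩)
  · exact (isHomogeneous_X k i).mul (isHomogeneous_X k j)
  · exact MvPolynomial.IsHomogeneous.sub ((isHomogeneous_X k i).pow 2)
      ((isHomogeneous_X k (i0 r)).pow 2)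
  · exact (isHomogeneous_X k j).pow 2

lemma mem_XX {i j : Fin r} (hi : (i : ℕ) < s) (hj : (j : ℕ) < s) (hij : i ≠ j) :
    X i * X j ∈ myIdeal k r s :=
  Ideal.subset_span (Or.inl ⟨i, j, hi, hj, hij, rfl⟩)

lemma mem_diff {i : Fin r} (hi : (i : ℕ) < s) (hi0 : i ≠ i0 r) :
    X i ^ 2 - X (i0 r) ^ 2 ∈ myIdeal k r s :=
  Ideal.subset_span (Or.inr (Or.inl ⟨i, hi, hi0, rfl⟩))

lemma mem_Ysq {j : Fin r} (hj : s ≤ (j : ℕ)) : X j ^ 2 ∈ myIdeal k r s :=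
  Ideal.subset_span (Or.inr (Or.inr ⟨j, hj, rfl⟩))

lemma mem_cube (hs2 : 2 ≤ s) (hsr : s ≤ r) {i : Fin r} (hi : (i : ℕ) < s) :
    X i ^ 3 ∈ myIdeal k r s := by
  by_cases h : i = i0 r
  · subst h
    have h1r : (1 : ℕ) < r := by omega
    set i1 : Fin r := ⟨1, h1r⟩ with hi1
    have hne : i1 ≠ i0 r := by
      intro e
      have : (1 : ℕ) = 0 := congrArg Fin.val e
      omega
    have : (X (i0 r) : MvPolynomial (Fin r) k) ^ 3 =
        (X (i0 r) * X i1) * X i1 - X (i0 r) * (X i1 ^ 2 - X (i0 r) ^ 2) := by ring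
    rw [this]
    exact sub_mem (Ideal.mul_mem_right _ _ (mem_XX k r s (i0_lt r s (by omega))
        (by rw [hi1]; show 1 < s; omega) (fun e => hne e.symm)))
      (Ideal.mul_mem_left _ _ (mem_diff k r s (by rw [hi1]; show 1 < s; omega) hne))
  · have : (X i : MvPolynomial (Fin r) k) ^ 3 = X i * (X i ^ 2 - X (i0 r) ^ 2) + (X i * X (i0 r)) * X (i0 r) := by ring
    rw [this]
    exact add_mem (Ideal.mul_mem_left _ _ (mem_diff k r s hi h))
      (Ideal.mul_mem_right _ _ (mem_XX k r s hi (i0_lt r s (by omega)) h))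

lemma monomial_mem_of_le {w v : Fin r →₀ ℕ} (h : (monomial w (1 : k)) ∈ myIdeal k r s)
    (hle : ∀ i, w i ≤ v i) : monomial v (1 : k) ∈ myIdeal k r s := by
  have hwv : v - w + w = v := by
    ext i
    rw [Finsupp.add_apply, Finsupp.tsub_apply]
    have := hle i
    omega
  have hv : monomial v (1 : k) = monomial (v - w) 1 * monomial w 1 := by
    rw [monomial_mul, mul_one, hwv]
  rw [hv]
  exact Ideal.mul_mem_left _ _ h

end Stmt8Aux

namespace Stmt8Aux
open Finsupp
variable (k : Type*) [Field k] (r s : ℕ) [NeZero r]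

lemma monomial_mem_of_not_std (hs2 : 2 ≤ s) (hsr : s ≤ r) {v : Fin r →₀ ℕ}
    (h : ¬ Std r s v) : monomial v (1 : k) ∈ myIdeal k r s := by
  rw [Std] at h
  push_neg at h
  by_cases hy : goodY r s v
  · by_cases hx : singleX r s v
    · -- xdeg ≥ 3
      have h3 : 3 ≤ xdeg r s v := by
        have := h hy hx; omega
      obtain ⟨i, hi, hvi, -⟩ := exists_x r s v hx (by omega)
      have hc : (monomial (Finsupp.single i 3) (1 : k)) ∈ myIdeal k r s := by
        rw [← X_pow_eq_monomial]
        exact mem_cube k r s hs2 hsr hi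
      refine monomial_mem_of_le k r s hc fun j => ?_
      rw [Finsupp.single_apply]
      split_ifs with hij
      · subst hij; omega
      · omega
    · -- two distinct x vars
      rw [singleX] at hx
      push_neg at hx
      obtain ⟨i, j, hi, hj, hij, hvi, hvj⟩ := hx
      have hc : (monomial (Finsupp.single i 1 + Finsupp.single j 1) (1 : k)) ∈ myIdeal k r s := by
        have : (monomial (Finsupp.single i 1 + Finsupp.single j 1) (1 : k)) = X i * X j := by
          rw [X, X, monomial_mul, one_mul]
        rw [this]
        exact mem_XX k r s hi hj hij
      refine monomial_mem_of_le k r s hc fun a => ?_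
      rw [Finsupp.add_apply, Finsupp.single_apply, Finsupp.single_apply]
      split_ifs with h1 h2 h3
      · exact absurd (h1.trans h2.symm) hij
      · subst h1; omega
      · subst h3; omega
      · omega
  · -- a y-variable with exponent ≥ 2
    rw [goodY] at hy
    push_neg at hy
    obtain ⟨j, hj, hvj⟩ := hy
    have hc : (monomial (Finsupp.single j 2) (1 : k)) ∈ myIdeal k r s := by
      rw [← X_pow_eq_monomial]
      exact mem_Ysq k r s hj
    refine monomial_mem_of_le k r s hc fun a => ?_
    rw [Finsupp.single_apply]
    split_ifs with hja
    · subst hja; omega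
    · omega

lemma monomial_sub_nf_mem (hs2 : 2 ≤ s) (hsr : s ≤ r) (v : Fin r →₀ ℕ) :
    monomial v (1 : k) - nf k r s v ∈ myIdeal k r s := by
  by_cases h : Std r s v
  · rw [nf_of_std k r s h]
    by_cases h2 : xdeg r s v = 2
    · obtain ⟨i, hi, hvi, hdec⟩ := exists_x r s v h.2.1 (by omega)
      rw [h2] at hvi
      by_cases hii0 : i = i0 r
      · have : adjust r s v = v := by
          rw [adjust, if_pos h2, ← hii0, ← hvi]
          exact hdec.symm
        rw [this, sub_self]
        exact zero_mem _
      · have key : monomial v (1 : k) - monomial (adjust r s v) 1 =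
            monomial (ypart r s v) 1 * (X i ^ 2 - X (i0 r) ^ 2) := by
          have hdec2 : v = ypart r s v + Finsupp.single i 2 := by rw [← hvi]; exact hdec
          rw [mul_sub, X_pow_eq_monomial, X_pow_eq_monomial, monomial_mul, monomial_mul,
            one_mul, adjust, if_pos h2]
          rw [← hdec2]
        rw [key]
        exact Ideal.mul_mem_left _ _ (mem_diff k r s hi hii0)
    · rw [adjust, if_neg h2, sub_self]
      exact zero_mem _
  · rw [nf_of_not_std k r s h, sub_zero]
    exact monomial_mem_of_not_std k r s hs2 hsr h

lemma sub_NN_mem (hs2 : 2 ≤ s) (hsr : s ≤ r) (p : MvPolynomial (Fin r) k) :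
    p - NN k r s p ∈ myIdeal k r s := by
  have hsplit : p - NN k r s p =
      ∑ v ∈ p.support, ((monomial v (coeff v p) : MvPolynomial (Fin r) k)
        - coeff v p • nf k r s v) := by
    rw [Finset.sum_sub_distrib, support_sum_monomial_coeff, ← NN_apply]
  rw [hsplit]
  refine Submodule.sum_mem _ fun v _ => ?_
  have : (monomial v (coeff v p) : MvPolynomial (Fin r) k) - coeff v p • nf k r s v =
      C (coeff v p) * (monomial v 1 - nf k r s v) := by
    rw [mul_sub, smul_eq_C_mul, C_mul_monomial, mul_one]
  rw [this]
  exact Ideal.mul_mem_left _ _ (monomial_sub_nf_mem k r s hs2 hsr v)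

end Stmt8Aux

namespace Stmt8Aux
open Finsupp
variable (k : Type*) [Field k] (r s : ℕ) [NeZero r]

lemma ypart_add_xsingle (w : Fin r →₀ ℕ) {i : Fin r} (hi : (i : ℕ) < s) (n : ℕ) :
    ypart r s (w + Finsupp.single i n) = ypart r s w := by
  ext j
  rw [ypart_apply, ypart_apply]
  split_ifs with h1
  · rw [Finsupp.add_apply, Finsupp.single_apply,
      if_neg (fun e : i = j => by rw [e] at hi; omega), add_zero]
  · rfl

open Classical in
lemma nf_add_xsq (w : Fin r →₀ ℕ) {i : Fin r} (hi : (i : ℕ) < s) (hs : 0 < s) :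
    nf k r s (w + Finsupp.single i 2) =
      if goodY r s w ∧ xdeg r s w = 0 then
        monomial (ypart r s w + Finsupp.single (i0 r) 2) (1 : k) else 0 := by
  have hyv : ∀ j : Fin r, s ≤ (j : ℕ) → ((w + Finsupp.single i 2 : Fin r →₀ ℕ)) j = w j := by
    intro j hj
    rw [Finsupp.add_apply, Finsupp.single_apply,
      if_neg (fun e : i = j => by rw [e] at hi; omega), add_zero]
  have hxd : xdeg r s (w + Finsupp.single i 2) = xdeg r s w + 2 := by
    rw [xdeg_add, xdeg_single, if_pos hi]
  split_ifs with hgood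
  · obtain ⟨hg, hx0⟩ := hgood
    have hstd : Std r s (w + Finsupp.single i 2) := by
      refine ⟨fun j hj => ?_, fun a b ha hb hab => ?_, by omega⟩
      · rw [hyv j hj]; exact hg j hj
      · have hwa : w a = 0 := (xdeg_eq_zero_iff r s w).mp hx0 a ha
        have hwb : w b = 0 := (xdeg_eq_zero_iff r s w).mp hx0 b hb
        rw [Finsupp.add_apply, Finsupp.add_apply, hwa, hwb, Finsupp.single_apply,
          Finsupp.single_apply]
        by_cases hA : i = a
        · right; simp [if_neg (fun e : i = b => hab (hA.symm.trans e))]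
        · left; simp [if_neg hA]
      
    rw [nf_of_std k r s hstd, adjust, if_pos (by omega), ypart_add_xsingle r s w hi]
  · apply nf_of_not_std
    intro ⟨hg, hx, hd⟩
    rw [hxd] at hd
    have hx0 : xdeg r s w = 0 := by omega
    refine hgood ⟨fun j hj => ?_, hx0⟩
    have := hg j hj
    rwa [hyv j hj] at this

lemma NN_monomial_mul_gen (hs : 0 < s) (w : Fin r →₀ ℕ) :
    ∀ g ∈ genSet k r s, NN k r s (monomial w (1 : k) * g) = 0 := by
  rintro g (⟨i, j, hi, hj, hij, rfl⟩ | ⟨i, hi, hi0, rfl⟩ | ⟨j, hj, rfl⟩)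
  · have : monomial w (1 : k) * (X i * X j) =
        monomial (w + (Finsupp.single i 1 + Finsupp.single j 1)) 1 := by
      rw [X, X, monomial_mul, monomial_mul, one_mul, one_mul]
    rw [this, NN_monomial_one]
    apply nf_of_not_std
    rintro ⟨-, hx, -⟩
    rcases hx i j hi hj hij with h | h <;>
        simp only [Finsupp.add_apply, Finsupp.single_apply] at h <;>
      split_ifs at h <;> omega
  · rw [mul_sub]
    have e1 : monomial w (1 : k) * X i ^ 2 = monomial (w + Finsupp.single i 2) 1 := by
      rw [X_pow_eq_monomial, monomial_mul, one_mul]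
    have e2 : monomial w (1 : k) * X (i0 r) ^ 2 =
        monomial (w + Finsupp.single (i0 r) 2) 1 := by
      rw [X_pow_eq_monomial, monomial_mul, one_mul]
    rw [map_sub, e1, e2, NN_monomial_one, NN_monomial_one,
      nf_add_xsq k r s w hi hs, nf_add_xsq k r s w (i0_lt r s hs) hs, sub_self]
  · have : monomial w (1 : k) * X j ^ 2 = monomial (w + Finsupp.single j 2) 1 := by
      rw [X_pow_eq_monomial, monomial_mul, one_mul]
    rw [this, NN_monomial_one]
    apply nf_of_not_std
    rintro ⟨hg, -, -⟩
    have := hg j hj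
    rw [Finsupp.add_apply, Finsupp.single_apply, if_pos rfl] at this
    omega

/-- the `k`-span of monomial multiples of the generators -/
noncomputable def MM : Submodule k (MvPolynomial (Fin r) k) :=
  Submodule.span k {p | ∃ w : Fin r →₀ ℕ, ∃ g ∈ genSet k r s, p = monomial w 1 * g}

lemma mul_mem_MM (q : MvPolynomial (Fin r) k) (hq : q ∈ MM k r s)
    (p : MvPolynomial (Fin r) k) : p * q ∈ MM k r s := by
  have hmon : ∀ (u : Fin r →₀ ℕ) (c : k), ∀ q' ∈ MM k r s,
      monomial u c * q' ∈ MM k r s := by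
    intro u c q' hq'
    refine Submodule.span_induction ?_ ?_ ?_ ?_ hq'
    · rintro x ⟨w, g, hg, rfl⟩
      have : monomial u c * (monomial w 1 * g) = c • (monomial (u + w) 1 * g) := by
        rw [← mul_assoc, monomial_mul, mul_one, ← smul_mul_assoc, smul_monomial,
          smul_eq_mul, mul_one]
      rw [this]
      exact Submodule.smul_mem _ _ (Submodule.subset_span ⟨u + w, g, hg, rfl⟩)
    · rw [mul_zero]; exact zero_mem _
    · intro a b _ _ ha hb
      rw [mul_add]; exact add_mem ha hb
    · intro c' a _ ha
      rw [mul_smul_comm]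
      exact Submodule.smul_mem _ _ ha
  induction p using MvPolynomial.induction_on' with
  | monomial u a => exact hmon u a q hq
  | add p1 p2 h1 h2 => rw [add_mul]; exact add_mem h1 h2

lemma myIdeal_le_MM (q : MvPolynomial (Fin r) k) (hq : q ∈ myIdeal k r s) :
    q ∈ MM k r s := by
  refine Submodule.span_induction ?_ ?_ ?_ ?_ hq
  · intro g hg
    have : g = monomial 0 1 * g := by rw [monomial_zero', C_1, one_mul]
    rw [this]
    exact Submodule.subset_span ⟨0, g, hg, rfl⟩
  · exact zero_mem _
  · intro a b _ _ ha hb; exact add_mem ha hb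
  · intro c a _ ha
    rw [smul_eq_mul]
    exact mul_mem_MM k r s a ha c

lemma NN_eq_zero_of_mem (hs : 0 < s) (q : MvPolynomial (Fin r) k)
    (hq : q ∈ myIdeal k r s) : NN k r s q = 0 := by
  have hq' := myIdeal_le_MM k r s q hq
  refine Submodule.span_induction ?_ ?_ ?_ ?_ hq'
  · rintro x ⟨w, g, hg, rfl⟩
    exact NN_monomial_mul_gen k r s hs w g hg
  · exact map_zero _
  · intro a b _ _ ha hb; rw [map_add, ha, hb, add_zero]
  · intro c a _ ha; rw [map_smul, ha, smul_zero]

lemma mem_myIdeal_iff (hs2 : 2 ≤ s) (hsr : s ≤ r) (q : MvPolynomial (Fin r) k) :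
    q ∈ myIdeal k r s ↔ NN k r s q = 0 := by
  constructor
  · exact NN_eq_zero_of_mem k r s (by omega) q
  · intro h
    have := sub_NN_mem k r s hs2 hsr q
    rwa [h, sub_zero] at this

end Stmt8Aux

namespace Stmt8Aux
open Finsupp
variable (k : Type*) [Field k] (r s : ℕ) [NeZero r]

lemma count_y : (∑ i : Fin r, if (i : ℕ) < s then 0 else 1) = r - s := by
  rw [Fin.sum_univ_eq_sum_range (fun i => if i < s then 0 else 1) r]
  rw [Finset.sum_ite, Finset.sum_const, Finset.sum_const, smul_eq_mul, smul_eq_mul,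
    mul_zero, zero_add, mul_one]
  have : (Finset.range r).filter (fun i => ¬ i < s) = Finset.Ico s r := by
    ext i
    simp only [Finset.mem_filter, Finset.mem_range, Finset.mem_Ico]
    omega
  rw [this, Nat.card_Ico]

lemma ydeg_le {v : Fin r →₀ ℕ} (hy : goodY r s v) : ydeg r s v ≤ r - s := by
  rw [ydeg, ← count_y r s]
  refine Finset.sum_le_sum fun i _ => ?_
  split_ifs with h
  · exact le_refl 0
  · exact hy i (by omega)

lemma deg_le_of_std {v : Fin r →₀ ℕ} (h : Std r s v) : deg r v ≤ 2 + (r - s) := by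
  rw [deg_eq r s]
  have := ydeg_le r s h.1
  have := h.2.2
  omega

/-- The top socle monomial exponent: `x₀² · y₁⋯y_m`. -/
noncomputable def vT : Fin r →₀ ℕ :=
  Finsupp.onFinset Finset.univ
    (fun i => if (i : ℕ) = 0 then 2 else if s ≤ (i : ℕ) then 1 else 0)
    (fun a _ => Finset.mem_univ a)

lemma vT_apply (i : Fin r) :
    vT r s i = if (i : ℕ) = 0 then 2 else if s ≤ (i : ℕ) then 1 else 0 := rfl

lemma vT_i0 : vT r s (i0 r) = 2 := by
  have h : ((i0 r : Fin r) : ℕ) = 0 := rfl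
  rw [vT_apply, if_pos h]

lemma xdeg_vT (hs : 0 < s) : xdeg r s (vT r s) = 2 := by
  rw [xdeg, Finset.sum_eq_single (i0 r)]
  · rw [if_pos (i0_lt r s hs), vT_i0]
  · intro j _ hj
    have hj0 : (j : ℕ) ≠ 0 := by
      intro e
      exact hj (Fin.ext (by rw [e]; rfl))
    rw [vT_apply, if_neg hj0]
    split_ifs with h1 h2 <;> omega
  · simp

lemma ydeg_vT (hs : 0 < s) : ydeg r s (vT r s) = r - s := by
  rw [ydeg, ← count_y r s]
  refine Finset.sum_congr rfl fun i _ => ?_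
  rw [vT_apply]
  split_ifs with h1 h2 h3 <;> omega

lemma deg_vT (hs : 0 < s) : deg r (vT r s) = 2 + (r - s) := by
  rw [deg_eq r s, xdeg_vT r s hs, ydeg_vT r s hs]

lemma ypart_vT_apply (hs : 0 < s) (j : Fin r) :
    ypart r s (vT r s) j = if s ≤ (j : ℕ) then 1 else 0 := by
  rw [ypart_apply, vT_apply]
  split_ifs with h1 h2 <;> first | rfl | omega

lemma can_vT (hs : 0 < s) : Can r s (vT r s) := by
  have hstd : Std r s (vT r s) := by
    refine ⟨fun j hj => ?_, fun a b ha hb hab => ?_, by rw [xdeg_vT r s hs]⟩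
    · rw [vT_apply]
      split_ifs with h1 h2 <;> omega
    · by_cases hA : (a : ℕ) = 0
      · right
        rw [vT_apply, if_neg (fun e => hab (Fin.ext (by omega))), if_neg (by omega)]
      · left
        rw [vT_apply, if_neg hA, if_neg (by omega)]
  refine ⟨hstd, ?_⟩
  rw [adjust, if_pos (xdeg_vT r s hs)]
  ext j
  rw [Finsupp.add_apply, ypart_vT_apply r s hs, Finsupp.single_apply, vT_apply]
  by_cases h0 : (j : ℕ) = 0
  · rw [if_pos h0, if_neg (by omega), if_pos (Fin.ext (by rw [h0]; rfl))]
  · rw [if_neg h0, if_neg (fun e : i0 r = j => h0 (by rw [← e]; rfl))]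
    split_ifs <;> omega

end Stmt8Aux

namespace Stmt8Aux
open Finsupp
variable (k : Type*) [Field k] (r s : ℕ) [NeZero r]

lemma goodY_ypart {v : Fin r →₀ ℕ} (h : goodY r s v) : goodY r s (ypart r s v) := by
  intro j hj
  rw [ypart_apply, if_pos hj]
  exact h j hj

lemma ypart_add_ysingle (w : Fin r →₀ ℕ) {j : Fin r} (hj : s ≤ (j : ℕ)) (n : ℕ) :
    ypart r s (w + Finsupp.single j n) = ypart r s w + Finsupp.single j n := by
  ext a
  simp only [Finsupp.add_apply, ypart_apply, Finsupp.single_apply]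
  by_cases h1 : s ≤ (a : ℕ)
  · rw [if_pos h1, if_pos h1]
  · rw [if_neg h1, if_neg h1, if_neg (fun e : j = a => by rw [e] at hj; exact h1 hj)]
    omega

lemma can_shape {v : Fin r →₀ ℕ} (hs : 0 < s) (h : Can r s v) :
    xdeg r s v = 0 ∨
      (∃ j : Fin r, (j : ℕ) < s ∧ v = ypart r s v + Finsupp.single j 1 ∧ xdeg r s v = 1) ∨
      (v = ypart r s v + Finsupp.single (i0 r) 2 ∧ xdeg r s v = 2) := by
  have hle : xdeg r s v ≤ 2 := h.1.2.2
  rcases Nat.lt_or_ge (xdeg r s v) 1 with h0 | h1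
  · left; omega
  rcases Nat.lt_or_ge (xdeg r s v) 2 with h2 | h3
  · right; left
    have hx1 : xdeg r s v = 1 := by omega
    obtain ⟨j, hj, hvj, hdec⟩ := exists_x r s v h.1.2.1 (by omega)
    rw [hx1] at hvj
    exact ⟨j, hj, by rw [← hvj]; exact hdec, hx1⟩
  · right; right
    have hx2 : xdeg r s v = 2 := by omega
    constructor
    · conv_lhs => rw [← h.2]
      rw [adjust, if_pos hx2]
    · exact hx2

lemma nf_add_x_of_x0 {v : Fin r →₀ ℕ} (hy : goodY r s v) (hx0 : xdeg r s v = 0)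
    {i : Fin r} (hi : (i : ℕ) < s) :
    nf k r s (v + Finsupp.single i 1) = monomial (v + Finsupp.single i 1) (1 : k) := by
  have hstd : Std r s (v + Finsupp.single i 1) := by
    refine ⟨fun j hj => ?_, fun a b ha hb hab => ?_, ?_⟩
    · rw [Finsupp.add_apply, Finsupp.single_apply,
        if_neg (fun e : i = j => by rw [e] at hi; omega), add_zero]
      exact hy j hj
    · have hva : v a = 0 := (xdeg_eq_zero_iff r s v).mp hx0 a ha
      have hvb : v b = 0 := (xdeg_eq_zero_iff r s v).mp hx0 b hb
      rw [Finsupp.add_apply, Finsupp.add_apply, hva, hvb, Finsupp.single_apply,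
        Finsupp.single_apply]
      by_cases hA : i = a
      · right; simp [if_neg (fun e : i = b => hab (hA.symm.trans e))]
      · left; simp [if_neg hA]
    · rw [xdeg_add, xdeg_single, if_pos hi, hx0]; omega
  rw [nf_of_std k r s hstd, adjust,
    if_neg (by rw [xdeg_add, xdeg_single, if_pos hi, hx0]; omega)]

lemma nf_add_x_of_x1 (hs : 0 < s) {v : Fin r →₀ ℕ} (hy : goodY r s v) {j : Fin r}
    (hj : (j : ℕ) < s) (hv : v = ypart r s v + Finsupp.single j 1)
    {i : Fin r} (hi : (i : ℕ) < s) :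
    nf k r s (v + Finsupp.single i 1) =
      if i = j then monomial (ypart r s v + Finsupp.single (i0 r) 2) (1 : k) else 0 := by
  have hvj : v j = 1 := by
    rw [hv, Finsupp.add_apply, ypart_apply, if_neg (by omega), Finsupp.single_apply,
      if_pos rfl]
  split_ifs with hij
  · subst hij
    have e1 : v + Finsupp.single i 1 = ypart r s v + Finsupp.single i 2 := by
      conv_lhs => rw [hv]
      rw [add_assoc, ← Finsupp.single_add]
    rw [e1, nf_add_xsq k r s _ hi hs,
      if_pos ⟨goodY_ypart r s hy, xdeg_ypart r s v⟩, ypart_eq_self r s _ (xdeg_ypart r s v)]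
  · apply nf_of_not_std
    rintro ⟨-, hx, -⟩
    rcases hx i j hi hj hij with h | h
    · rw [Finsupp.add_apply, Finsupp.single_apply, if_pos rfl] at h; omega
    · rw [Finsupp.add_apply, Finsupp.single_apply, if_neg hij] at h; omega

lemma nf_add_x_of_x2 {v : Fin r →₀ ℕ} (hx2 : xdeg r s v = 2) {i : Fin r}
    (hi : (i : ℕ) < s) : nf k r s (v + Finsupp.single i 1) = 0 := by
  apply nf_of_not_std
  rintro ⟨-, -, hd⟩
  rw [xdeg_add, xdeg_single, if_pos hi, hx2] at hd
  omega

lemma nf_add_y (hs : 0 < s) {w : Fin r →₀ ℕ} (hw : Can r s w) {j0 : Fin r}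
    (hj0 : s ≤ (j0 : ℕ)) :
    nf k r s (w + Finsupp.single j0 1) =
      if w j0 = 0 then monomial (w + Finsupp.single j0 1) (1 : k) else 0 := by
  split_ifs with hwj0
  · have hstd : Std r s (w + Finsupp.single j0 1) := by
      refine ⟨fun j hj => ?_, fun a b ha hb hab => ?_, ?_⟩
      · rw [Finsupp.add_apply, Finsupp.single_apply]
        by_cases hA : j0 = j
        · subst hA; rw [if_pos rfl, hwj0]
        · rw [if_neg hA, add_zero]; exact hw.1.1 j hj
      · have ha' : (w + Finsupp.single j0 1 : Fin r →₀ ℕ) a = w a := by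
          rw [Finsupp.add_apply, Finsupp.single_apply,
            if_neg (fun e : j0 = a => by rw [e] at hj0; omega), add_zero]
        have hb' : (w + Finsupp.single j0 1 : Fin r →₀ ℕ) b = w b := by
          rw [Finsupp.add_apply, Finsupp.single_apply,
            if_neg (fun e : j0 = b => by rw [e] at hj0; omega), add_zero]
        rw [ha', hb']
        exact hw.1.2.1 a b ha hb hab
      · rw [xdeg_add, xdeg_single, if_neg (by omega), add_zero]
        exact hw.1.2.2
    rw [nf_of_std k r s hstd, adjust]
    have hxd : xdeg r s (w + Finsupp.single j0 1) = xdeg r s w := by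
      rw [xdeg_add, xdeg_single, if_neg (by omega), add_zero]
    split_ifs with h2
    · rw [hxd] at h2
      have hwdec : w = ypart r s w + Finsupp.single (i0 r) 2 := by
        conv_lhs => rw [← hw.2]
        rw [adjust, if_pos h2]
      rw [ypart_add_ysingle r s w hj0]
      conv_rhs => rw [hwdec]
      abel
    · rfl
  · apply nf_of_not_std
    rintro ⟨hg, -, -⟩
    have := hg j0 hj0
    rw [Finsupp.add_apply, Finsupp.single_apply, if_pos rfl] at this
    omega

lemma coeff_NN_X_mul (q : MvPolynomial (Fin r) k) (i : Fin r) (u : Fin r →₀ ℕ) :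
    coeff u (NN k r s (X i * q)) =
      ∑ w ∈ q.support, coeff w q * coeff u (nf k r s (w + Finsupp.single i 1)) := by
  have h1 : X i * q = ∑ w ∈ q.support, monomial (w + Finsupp.single i 1) (coeff w q) := by
    conv_lhs => rw [← support_sum_monomial_coeff q]
    rw [Finset.mul_sum]
    refine Finset.sum_congr rfl fun w _ => ?_
    rw [X, monomial_mul, one_mul, add_comm]
  rw [h1, map_sum, coeff_sum]
  refine Finset.sum_congr rfl fun w _ => ?_
  rw [NN_monomial, coeff_smul, smul_eq_mul]

end Stmt8Aux

namespace Stmt8Aux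
open Finsupp
variable (k : Type*) [Field k] (r s : ℕ) [NeZero r]

lemma xdeg_ne_imp_ne {u u' : Fin r →₀ ℕ} (h : xdeg r s u ≠ xdeg r s u') : u ≠ u' :=
  fun e => h (by rw [e])

lemma socle_coeff_zero (hs2 : 2 ≤ s) (hsr : s ≤ r) (q : MvPolynomial (Fin r) k)
    (hcan : ∀ u : Fin r →₀ ℕ, coeff u q ≠ 0 → Can r s u)
    (hze : ∀ i : Fin r, NN k r s (X i * q) = 0)
    {v : Fin r →₀ ℕ} (hv : Can r s v) (hvT : v ≠ vT r s) : coeff v q = 0 := by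
  have hs : 0 < s := by omega
  by_cases hvsupp : v ∈ q.support
  swap
  · exact MvPolynomial.notMem_support_iff.mp hvsupp
  rcases can_shape r s hs hv with h0 | ⟨j, hj, hvj, hx1⟩ | ⟨hv2, hx2⟩
  · -- Shape A : xdeg v = 0; multiply by X (i0 r)
    set u : Fin r →₀ ℕ := v + Finsupp.single (i0 r) 1 with hu
    have hxu : xdeg r s u = 1 := by
      rw [hu, xdeg_add, xdeg_single, if_pos (i0_lt r s hs), h0]
    have hsum := coeff_NN_X_mul k r s q (i0 r) u
    rw [hze (i0 r), coeff_zero] at hsum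
    rw [Finset.sum_eq_single_of_mem v hvsupp] at hsum
    · rw [nf_add_x_of_x0 k r s hv.1.1 h0 (i0_lt r s hs), ← hu, coeff_monomial,
        if_pos rfl, mul_one] at hsum
      exact hsum.symm
    · intro w hw hwv
      have hcw := hcan w (MvPolynomial.mem_support_iff.mp hw)
      rcases can_shape r s hs hcw with g0 | ⟨j', hj', hwj', gx1⟩ | ⟨hw2, gx2⟩
      · rw [nf_add_x_of_x0 k r s hcw.1.1 g0 (i0_lt r s hs), coeff_monomial,
          if_neg (fun e => hwv (by
            have := e
            rw [hu] at this
            exact add_right_cancel this)), mul_zero]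
      · rw [nf_add_x_of_x1 k r s hs hcw.1.1 hj' hwj' (i0_lt r s hs)]
        split_ifs with hii
        · rw [coeff_monomial, if_neg, mul_zero]
          refine xdeg_ne_imp_ne r s ?_
          rw [hxu, xdeg_add, xdeg_ypart, xdeg_single, if_pos (i0_lt r s hs)]
          omega
        · rw [coeff_zero, mul_zero]
      · rw [nf_add_x_of_x2 k r s gx2 (i0_lt r s hs), coeff_zero, mul_zero]
  · -- Shape B : v = ypart v + single j 1; multiply by X j
    set u : Fin r →₀ ℕ := ypart r s v + Finsupp.single (i0 r) 2 with hu
    have hxu : xdeg r s u = 2 := by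
      rw [hu, xdeg_add, xdeg_ypart, xdeg_single, if_pos (i0_lt r s hs)]
    have hsum := coeff_NN_X_mul k r s q j u
    rw [hze j, coeff_zero] at hsum
    rw [Finset.sum_eq_single_of_mem v hvsupp] at hsum
    · rw [nf_add_x_of_x1 k r s hs hv.1.1 hj hvj hj, if_pos rfl, ← hu, coeff_monomial,
        if_pos rfl, mul_one] at hsum
      exact hsum.symm
    · intro w hw hwv
      have hcw := hcan w (MvPolynomial.mem_support_iff.mp hw)
      rcases can_shape r s hs hcw with g0 | ⟨j', hj', hwj', gx1⟩ | ⟨hw2, gx2⟩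
      · rw [nf_add_x_of_x0 k r s hcw.1.1 g0 hj, coeff_monomial, if_neg, mul_zero]
        refine xdeg_ne_imp_ne r s ?_
        rw [hxu, xdeg_add, xdeg_single, if_pos hj, g0]
        omega
      · rw [nf_add_x_of_x1 k r s hs hcw.1.1 hj' hwj' hj]
        split_ifs with hjj
        · subst hjj
          rw [coeff_monomial, if_neg, mul_zero]
          intro e
          rw [hu] at e
          have hyy : ypart r s w = ypart r s v := add_right_cancel e
          exact hwv (by rw [hwj', hvj, hyy])
        · rw [coeff_zero, mul_zero]
      · rw [nf_add_x_of_x2 k r s gx2 hj, coeff_zero, mul_zero]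
  · -- Shape C : v = ypart v + single i0 2 ; pick an absent y variable
    have hex : ∃ j0 : Fin r, s ≤ (j0 : ℕ) ∧ v j0 = 0 := by
      by_contra hno
      push_neg at hno
      refine hvT ?_
      ext a
      rw [vT_apply]
      by_cases ha0 : (a : ℕ) = 0
      · rw [if_pos ha0]
        have : a = i0 r := Fin.ext (by rw [ha0]; rfl)
        subst this
        conv_lhs => rw [hv2]
        rw [Finsupp.add_apply, ypart_apply, if_neg (by omega), Finsupp.single_apply,
          if_pos rfl]
      · rw [if_neg ha0]
        by_cases has : s ≤ (a : ℕ)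
        · rw [if_pos has]
          have h1 := hno a has
          have h2 := hv.1.1 a has
          omega
        · rw [if_neg has]
          conv_lhs => rw [hv2]
          rw [Finsupp.add_apply, ypart_apply, if_neg has, Finsupp.single_apply,
            if_neg (fun e : i0 r = a => ha0 (by rw [← e]; rfl))]
          omega
    obtain ⟨j0, hj0s, hvj0⟩ := hex
    set u : Fin r →₀ ℕ := v + Finsupp.single j0 1 with hu
    have hsum := coeff_NN_X_mul k r s q j0 u
    rw [hze j0, coeff_zero] at hsum
    rw [Finset.sum_eq_single_of_mem v hvsupp] at hsum
    · rw [nf_add_y k r s hs hv hj0s, if_pos hvj0, ← hu, coeff_monomial,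
        if_pos rfl, mul_one] at hsum
      exact hsum.symm
    · intro w hw hwv
      have hcw := hcan w (MvPolynomial.mem_support_iff.mp hw)
      rw [nf_add_y k r s hs hcw hj0s]
      split_ifs with hwj0
      · rw [coeff_monomial, if_neg (fun e => hwv (by
          rw [hu] at e
          exact add_right_cancel e)), mul_zero]
      · rw [coeff_zero, mul_zero]

end Stmt8Aux

namespace Stmt8Aux
open Finsupp
variable (k : Type*) [Field k] (r s : ℕ) [NeZero r]

lemma deg_of_mem_support {p : MvPolynomial (Fin r) k} {n : ℕ}
    (hp : p.IsHomogeneous n) {v : Fin r →₀ ℕ} (hv : v ∈ p.support) : deg r v = n := by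
  have h := hp (MvPolynomial.mem_support_iff.mp hv)
  rw [deg_eq_degree, Finsupp.degree_eq_weight_one]
  exact h

lemma isHomog_myIdeal : IsHomog k (Fin r) (myIdeal k r s) := by
  intro p hp d
  have hp' := myIdeal_le_MM k r s p hp
  revert d
  refine Submodule.span_induction ?_ ?_ ?_ ?_ hp'
  · rintro x ⟨w, g, hg, rfl⟩ d
    have hhom : (monomial w 1 * g).IsHomogeneous (Finsupp.degree w + 2) :=
      (isHomogeneous_monomial 1 rfl).mul (gen_homog k r s g hg)
    rw [homogeneousComponent_of_mem hhom]
    split_ifs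
    · exact Ideal.mul_mem_left _ _ (Ideal.subset_span hg)
    · exact zero_mem _
  · intro d
    rw [map_zero]; exact zero_mem _
  · intro x y _ _ hx hy d
    rw [map_add]; exact add_mem (hx d) (hy d)
  · intro c x _ hx d
    rw [map_smul, smul_eq_C_mul]
    exact Ideal.mul_mem_left _ _ (hx d)

lemma genByQuadrics_myIdeal : GenByQuadrics k (Fin r) (myIdeal k r s) :=
  ⟨genSet k r s, gen_homog k r s, rfl⟩

lemma can_of_deg_le_one {v : Fin r →₀ ℕ} (hd : deg r v ≤ 1) : Can r s v := by
  have hcoord : ∀ j : Fin r, v j ≤ deg r v := fun j =>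
    Finset.single_le_sum (f := fun i => v i) (fun i _ => Nat.zero_le _) (Finset.mem_univ j)
  have hxle : xdeg r s v ≤ deg r v := by
    rw [deg_eq r s]; omega
  refine ⟨⟨fun j _ => le_trans (hcoord j) hd, fun a b _ _ hab => ?_, by omega⟩, ?_⟩
  · by_contra hcon
    push_neg at hcon
    have h2 : 2 ≤ v a + v b := by omega
    have : v a + v b ≤ deg r v := by
      rw [deg, ← Finset.sum_pair hab]
      exact Finset.sum_le_sum_of_subset (Finset.subset_univ _)
    omega
  · rw [adjust, if_neg (by omega)]

lemma NN_eq_self_of_supp_can {p : MvPolynomial (Fin r) k}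
    (h : ∀ v ∈ p.support, Can r s v) : NN k r s p = p := by
  rw [NN_apply]
  conv_rhs => rw [← support_sum_monomial_coeff p]
  refine Finset.sum_congr rfl fun v hv => ?_
  rw [nf_of_can k r s (h v hv), smul_monomial, smul_eq_mul, mul_one]

lemma noLinearForms_myIdeal (hs2 : 2 ≤ s) (hsr : s ≤ r) :
    NoLinearForms k (Fin r) (myIdeal k r s) := by
  intro p hp hmem
  have h1 : NN k r s p = p :=
    NN_eq_self_of_supp_can k r s fun v hv =>
      can_of_deg_le_one r s (le_of_eq (deg_of_mem_support k r hp hv))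
  have h2 := NN_eq_zero_of_mem k r s (by omega) p hmem
  rw [h1] at h2
  exact h2

lemma quotPiece_eq_bot (hs2 : 2 ≤ s) (hsr : s ≤ r) (d : ℕ) (hd : 2 + (r - s) < d) :
    quotPiece k (Fin r) (myIdeal k r s) d = ⊥ := by
  rw [eq_bot_iff]
  rintro x ⟨p, hp, rfl⟩
  have hNN : NN k r s p = 0 := by
    rw [NN_apply]
    refine Finset.sum_eq_zero fun v hv => ?_
    have hdv : deg r v = d := deg_of_mem_support k r hp hv
    rw [nf_of_not_std k r s (fun hstd => by
      have := deg_le_of_std r s hstd; omega), smul_zero]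
  have hmem : p ∈ myIdeal k r s := (mem_myIdeal_iff k r s hs2 hsr p).mpr hNN
  simp only [AlgHom.toLinearMap_apply, Ideal.Quotient.mkₐ_eq_mk]
  rw [Submodule.mem_bot, Ideal.Quotient.eq_zero_iff_mem]
  exact hmem

lemma hilb_eq_zero (hs2 : 2 ≤ s) (hsr : s ≤ r) (d : ℕ) (hd : 2 + (r - s) < d) :
    hilb k (Fin r) (myIdeal k r s) d = 0 := by
  rw [hilb, quotPiece_eq_bot k r s hs2 hsr d hd, finrank_bot]

end Stmt8Aux

namespace Stmt8Aux
open Finsupp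
variable (k : Type*) [Field k] (r s : ℕ) [NeZero r]

instance homog_fd (d : ℕ) : FiniteDimensional k (homogeneousSubmodule (Fin r) k d) :=
  Submodule.finiteDimensional_of_le
    (S₂ := MvPolynomial.restrictTotalDegree (Fin r) k d)
    (fun p hp => by
      rw [MvPolynomial.mem_restrictTotalDegree]
      exact MvPolynomial.IsHomogeneous.totalDegree_le hp)

instance quotPiece_fd (I : Ideal (MvPolynomial (Fin r) k)) (d : ℕ) :
    FiniteDimensional k (quotPiece k (Fin r) I d) :=
  Module.Finite.map _ _

/-- the socle monomial -/
noncomputable def T : MvPolynomial (Fin r) k := monomial (vT r s) 1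

lemma T_not_mem (hs2 : 2 ≤ s) (hsr : s ≤ r) : T k r s ∉ myIdeal k r s := by
  rw [mem_myIdeal_iff k r s hs2 hsr, T, NN_monomial_one,
    nf_of_can k r s (can_vT r s (by omega))]
  intro h
  exact one_ne_zero (monomial_eq_zero.mp h)

lemma mk_T_ne_zero (hs2 : 2 ≤ s) (hsr : s ≤ r) :
    Ideal.Quotient.mk (myIdeal k r s) (T k r s) ≠ 0 := by
  rw [Ne, Ideal.Quotient.eq_zero_iff_mem]
  exact T_not_mem k r s hs2 hsr

lemma mk_T_mem_quotPiece (hs2 : 2 ≤ s) (hsr : s ≤ r) :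
    Ideal.Quotient.mk (myIdeal k r s) (T k r s) ∈
      quotPiece k (Fin r) (myIdeal k r s) (2 + (r - s)) := by
  refine ⟨T k r s, ?_, by rw [AlgHom.toLinearMap_apply, Ideal.Quotient.mkₐ_eq_mk]⟩
  rw [SetLike.mem_coe, mem_homogeneousSubmodule]
  exact isHomogeneous_monomial 1 (by rw [← deg_eq_degree, deg_vT r s (by omega)])

lemma hilb_top_ne_zero (hs2 : 2 ≤ s) (hsr : s ≤ r) :
    hilb k (Fin r) (myIdeal k r s) (2 + (r - s)) ≠ 0 := by
  rw [hilb]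
  intro h
  have hall := finrank_zero_iff_forall_zero.mp h
  have hmem := mk_T_mem_quotPiece k r s hs2 hsr
  have := hall ⟨_, hmem⟩
  rw [Submodule.mk_eq_zero] at this
  exact mk_T_ne_zero k r s hs2 hsr this

lemma X_mul_T_mem (hs2 : 2 ≤ s) (hsr : s ≤ r) (i : Fin r) :
    X i * T k r s ∈ myIdeal k r s := by
  rw [mem_myIdeal_iff k r s hs2 hsr]
  have h1 : X i * T k r s = monomial (vT r s + Finsupp.single i 1) 1 := by
    rw [T, X, monomial_mul, one_mul, add_comm]
  rw [h1, NN_monomial_one]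
  by_cases hi : (i : ℕ) < s
  · exact nf_add_x_of_x2 k r s (xdeg_vT r s (by omega)) hi
  · rw [nf_add_y k r s (by omega) (can_vT r s (by omega)) (by omega)]
    rw [if_neg]
    rw [vT_apply, if_neg (by omega), if_pos (by omega)]
    omega

lemma mk_T_mem_socle (hs2 : 2 ≤ s) (hsr : s ≤ r) :
    Ideal.Quotient.mk (myIdeal k r s) (T k r s) ∈ socle k (Fin r) (myIdeal k r s) := by
  rw [socle, Submodule.mem_iInf]
  intro i
  rw [LinearMap.mem_ker, LinearMap.mulLeft_apply, ← map_mul,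
    Ideal.Quotient.eq_zero_iff_mem]
  exact X_mul_T_mem k r s hs2 hsr i

lemma coeff_NN_can (p : MvPolynomial (Fin r) k) (hs : 0 < s) {u : Fin r →₀ ℕ}
    (h : coeff u (NN k r s p) ≠ 0) : Can r s u := by
  rw [NN_apply, coeff_sum] at h
  obtain ⟨v, _, hv⟩ := Finset.exists_ne_zero_of_sum_ne_zero h
  rw [coeff_smul] at hv
  have hnf : coeff u (nf k r s v) ≠ 0 := fun e => hv (by rw [e, smul_zero])
  by_cases hstd : Std r s v
  · rw [nf_of_std k r s hstd, coeff_monomial] at hnf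
    by_cases he : adjust r s v = u
    · rw [← he]
      exact can_adjust r s hs hstd
    · rw [if_neg he] at hnf
      exact absurd rfl hnf
  · rw [nf_of_not_std k r s hstd, coeff_zero] at hnf
    exact absurd rfl hnf

lemma socle_eq (hs2 : 2 ≤ s) (hsr : s ≤ r) :
    socle k (Fin r) (myIdeal k r s) =
      Submodule.span k {Ideal.Quotient.mk (myIdeal k r s) (T k r s)} := by
  apply le_antisymm
  · intro a ha
    obtain ⟨p, rfl⟩ := Ideal.Quotient.mk_surjective a
    set q : MvPolynomial (Fin r) k := NN k r s p with hqdef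
    have hmkq : Ideal.Quotient.mk (myIdeal k r s) q = Ideal.Quotient.mk (myIdeal k r s) p := by
      rw [Ideal.Quotient.mk_eq_mk_iff_sub_mem]
      have := sub_NN_mem k r s hs2 hsr p
      rw [← neg_sub]
      exact neg_mem this
    have hcan : ∀ u : Fin r →₀ ℕ, coeff u q ≠ 0 → Can r s u := fun u hu =>
      coeff_NN_can k r s p (by omega) hu
    have hze : ∀ i : Fin r, NN k r s (X i * q) = 0 := by
      intro i
      refine NN_eq_zero_of_mem k r s (by omega) _ ?_
      rw [socle, Submodule.mem_iInf] at ha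
      have hi := ha i
      rw [LinearMap.mem_ker, LinearMap.mulLeft_apply] at hi
      rw [← Ideal.Quotient.eq_zero_iff_mem, map_mul, hmkq]
      exact hi
    have hq : q = coeff (vT r s) q • T k r s := by
      ext u
      rw [coeff_smul, T, coeff_monomial, smul_eq_mul]
      by_cases hu : u = vT r s
      · rw [if_pos hu.symm, mul_one, hu]
      · rw [if_neg (fun e => hu e.symm), mul_zero]
        by_contra hne
        exact hne (socle_coeff_zero k r s hs2 hsr q hcan hze (hcan u hne) hu)
    rw [← hmkq, hq]
    have : Ideal.Quotient.mk (myIdeal k r s) (coeff (vT r s) q • T k r s) =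
        coeff (vT r s) q • Ideal.Quotient.mk (myIdeal k r s) (T k r s) := by
      rw [← Ideal.Quotient.mkₐ_eq_mk k, ← AlgHom.toLinearMap_apply, map_smul,
        AlgHom.toLinearMap_apply]
    rw [this]
    exact Submodule.smul_mem _ _ (Submodule.subset_span rfl)
  · rw [Submodule.span_le, Set.singleton_subset_iff]
    exact mk_T_mem_socle k r s hs2 hsr

lemma gorenstein_myIdeal (hs2 : 2 ≤ s) (hsr : s ≤ r) :
    GorensteinHF k (Fin r) (myIdeal k r s) := by
  rw [GorensteinHF, socle_eq k r s hs2 hsr]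
  exact finrank_span_singleton (mk_T_ne_zero k r s hs2 hsr)

end Stmt8Aux


theorem stmt_8 (k : Type*) [Field k] (r e : ℕ) (hr : 2 ≤ r) (he2 : 2 ≤ e) (her : e ≤ r) :
    ∃ I : Ideal (MvPolynomial (Fin r) k),
      AGQuad k (Fin r) I ∧ IsSocleDegree k (Fin r) I e := by
  haveI : NeZero r := ⟨by omega⟩
  set s := r - e + 2 with hs
  have hs2 : 2 ≤ s := by omega
  have hsr : s ≤ r := by omega
  have he : 2 + (r - s) = e := by omega
  refine ⟨Stmt8Aux.myIdeal k r s, ⟨?_, ?_, ?_, ?_, ?_⟩, ?_, ?_⟩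
  · exact Stmt8Aux.isHomog_myIdeal k r s
  · exact Stmt8Aux.noLinearForms_myIdeal k r s hs2 hsr
  · exact Stmt8Aux.genByQuadrics_myIdeal k r s
  · exact ⟨e + 1, fun d hd => Stmt8Aux.hilb_eq_zero k r s hs2 hsr d (by omega)⟩
  · exact Stmt8Aux.gorenstein_myIdeal k r s hs2 hsr
  · rw [← he]
    exact Stmt8Aux.hilb_top_ne_zero k r s hs2 hsr
  · intro d hd
    exact Stmt8Aux.hilb_eq_zero k r s hs2 hsr d (by omega)
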